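/- Let H be a complex Hilbert space and let a, b be closed subspaces of H with a not contained in b. Then there exists a unit vector u ∈ a with u ∉ b such that the function m : C(H) → ℝ defined by m(c) = ‖P_c u‖², where P_c is the orthogonal projection onto the closed subspace c, is a state on the ortholattice C(H) satisfying m(a) = 1 and m(b) < 1. Consequently, C(H) admits a strong set of states. -/

import Mathlib

open scoped InnerProductSpace


/-- A closed subspace of a complex Hilbert space `H`: an element of `C(H)`. -/
def ClosedSubspace (H : Type*) [NormedAddCommGroup H] [InnerProductSpace ℂ H] : Type _ :=
  {K : Submodule ℂ H // IsClosed (K : Set H)}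

namespace ClosedSubspace

variable {H : Type*} [NormedAddCommGroup H] [InnerProductSpace ℂ H]

/-- The greatest element of `C(H)`: the whole space. -/
def top : ClosedSubspace H := ⟨⊤, by rw [Submodule.top_coe]; exact isClosed_univ⟩

/-- The join in `C(H)`: the topological closure of the subspace sum. -/
def sup (a b : ClosedSubspace H) : ClosedSubspace H :=
  ⟨(a.1 ⊔ b.1).topologicalClosure, Submodule.isClosed_topologicalClosure _⟩

/-- The orthocomplement in `C(H)`. -/
noncomputable def compl (a : ClosedSubspace H) : ClosedSubspace H :=
  ⟨a.1ᗮ, Submodule.isClosed_orthogonal _⟩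

/-- The partial order of `C(H)`: inclusion. -/
def le (a b : ClosedSubspace H) : Prop := a.1 ≤ b.1

/-- A state (probability measure) on the ortholattice `C(H)`. -/
def IsState (m : ClosedSubspace H → ℝ) : Prop :=
  (∀ a : ClosedSubspace H, 0 ≤ m a ∧ m a ≤ 1) ∧ m top = 1 ∧
    ∀ a b : ClosedSubspace H, le a (compl b) → m (sup a b) = m a + m b

variable [CompleteSpace H]

/-- The map `c ↦ ‖P_c u‖²`, where `P_c` is the orthogonal projection onto the
closed subspace `c`. -/
noncomputable def projSq (u : H) (c : ClosedSubspace H) : ℝ :=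
  haveI : CompleteSpace c.1 := c.2.completeSpace_coe
  ‖(c.1.orthogonalProjection u : H)‖ ^ 2

end ClosedSubspace

open ClosedSubspace in
private lemma aux_state {H : Type*} [NormedAddCommGroup H] [InnerProductSpace ℂ H]
    [CompleteSpace H] (u : H) (hu : ‖u‖ = 1) : IsState (projSq u) := by
  classical
  have hbound : ∀ c : ClosedSubspace H, 0 ≤ projSq u c ∧ projSq u c ≤ 1 := by
    intro c
    haveI : CompleteSpace c.1 := c.2.completeSpace_coe
    constructor
    · exact sq_nonneg _
    · have h1 : ‖(Submodule.orthogonalProjection c.1 u : H)‖ ≤ ‖u‖ := by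
        have := (Submodule.orthogonalProjection c.1).le_opNorm u
        have h2 := Submodule.orthogonalProjectionOnto_norm_le c.1
        calc ‖(Submodule.orthogonalProjection c.1 u : H)‖ = ‖Submodule.orthogonalProjection c.1 u‖ := rfl
          _ ≤ ‖Submodule.orthogonalProjection c.1‖ * ‖u‖ := this
          _ ≤ 1 * ‖u‖ := by
              exact mul_le_mul_of_nonneg_right h2 (norm_nonneg _)
          _ = ‖u‖ := one_mul _
      rw [hu] at h1
      have := pow_le_one₀ (norm_nonneg (Submodule.orthogonalProjection c.1 u : H)) h1 (n := 2)
      simpa [projSq] using this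
  refine ⟨hbound, ?_, ?_⟩
  · have : (Submodule.orthogonalProjection (⊤ : Submodule ℂ H) u : H) = u :=
      Submodule.starProjection_eq_self_iff.2 trivial
    simp [projSq, top, this, hu]
    exact Or.inl ((congrArg norm this).trans hu)
  · intro c d hcd
    haveI : CompleteSpace c.1 := c.2.completeSpace_coe
    haveI : CompleteSpace d.1 := d.2.completeSpace_coe
    haveI : CompleteSpace (sup c d).1 := (sup c d).2.completeSpace_coe
    set v : H := (Submodule.orthogonalProjection c.1 u : H) + (Submodule.orthogonalProjection d.1 u : H) with hv
    have hcperp : c.1 ≤ d.1ᗮ := hcd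
    have hvc : (Submodule.orthogonalProjection c.1 u : H) ∈ c.1 := (Submodule.orthogonalProjection c.1 u).2
    have hvd : (Submodule.orthogonalProjection d.1 u : H) ∈ d.1 := (Submodule.orthogonalProjection d.1 u).2
    have hinner : ⟪(Submodule.orthogonalProjection c.1 u : H), (Submodule.orthogonalProjection d.1 u : H)⟫_ℂ = 0 :=
      inner_eq_zero_symm.mp (hcperp hvc _ hvd)
    have hvmem : v ∈ (sup c d).1 :=
      Submodule.le_topologicalClosure _
        (Submodule.add_mem_sup hvc hvd)
    have hperp : ∀ w ∈ (sup c d).1, ⟪u - v, w⟫_ℂ = 0 := by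
      have hker : ∀ w ∈ c.1 ⊔ d.1, ⟪u - v, w⟫_ℂ = 0 := by
        intro w hw
        have humem : u - v ∈ c.1ᗮ ⊓ d.1ᗮ := by
          constructor
          · intro z hz
            have h1 : ⟪z, u - (Submodule.orthogonalProjection c.1 u : H)⟫_ℂ = 0 := by
              rw [inner_eq_zero_symm]
              exact Submodule.starProjection_inner_eq_zero u z hz
            have h2 : ⟪z, (Submodule.orthogonalProjection d.1 u : H)⟫_ℂ = 0 :=
              inner_eq_zero_symm.mp (hcperp hz _ hvd)
            have : ⟪z, u - v⟫_ℂ = ⟪z, u - (Submodule.orthogonalProjection c.1 u : H)⟫_ℂ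
                - ⟪z, (Submodule.orthogonalProjection d.1 u : H)⟫_ℂ := by
              rw [← inner_sub_right]; congr 1; rw [hv]; abel
            rw [this, h1, h2, sub_zero]
          · intro z hz
            have h1 : ⟪z, u - (Submodule.orthogonalProjection d.1 u : H)⟫_ℂ = 0 := by
              rw [inner_eq_zero_symm]
              exact Submodule.starProjection_inner_eq_zero u z hz
            have h2 : ⟪z, (Submodule.orthogonalProjection c.1 u : H)⟫_ℂ = 0 := hcperp hvc z hz
            have : ⟪z, u - v⟫_ℂ = ⟪z, u - (Submodule.orthogonalProjection d.1 u : H)⟫_ℂ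
                - ⟪z, (Submodule.orthogonalProjection c.1 u : H)⟫_ℂ := by
              rw [← inner_sub_right]; congr 1; rw [hv]; abel
            rw [this, h1, h2, sub_zero]
        have humem' : u - v ∈ (c.1 ⊔ d.1)ᗮ := by
          rw [← Submodule.inf_orthogonal]; exact humem
        exact (Submodule.mem_orthogonal' _ _).1 humem' w hw
      -- extend to the closure using continuity of the inner product
      intro w hw
      have hclosed : IsClosed {w : H | ⟪u - v, w⟫_ℂ = 0} := by
        have : {w : H | ⟪u - v, w⟫_ℂ = 0} = (innerSL ℂ (u - v)) ⁻¹' {0} := rfl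
        rw [this]
        exact IsClosed.preimage (innerSL ℂ (u - v)).continuous isClosed_singleton
      have hsub : (↑(c.1 ⊔ d.1) : Set H) ⊆ {w : H | ⟪u - v, w⟫_ℂ = 0} := fun w hw => hker w hw
      have := closure_minimal hsub hclosed
      exact this (by rw [← Submodule.topologicalClosure_coe]; exact hw)
    have hproj : (Submodule.orthogonalProjection (sup c d).1 u : H) = v :=
      Submodule.eq_starProjection_of_mem_of_inner_eq_zero hvmem hperp
    have hpyth : ‖v‖ ^ 2 = ‖(Submodule.orthogonalProjection c.1 u : H)‖ ^ 2
        + ‖(Submodule.orthogonalProjection d.1 u : H)‖ ^ 2 := by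
      simp only [sq]
      exact norm_add_sq_eq_norm_sq_add_norm_sq_of_inner_eq_zero _ _ hinner
    simp only [projSq, hproj, hpyth]

open ClosedSubspace in
private lemma aux_exists {H : Type*} [NormedAddCommGroup H] [InnerProductSpace ℂ H]
    [CompleteSpace H] (a b : ClosedSubspace H) (hab : ¬ le a b) :
    ∃ u : H, ‖u‖ = 1 ∧ u ∈ a.1 ∧ u ∉ b.1 ∧
      IsState (projSq u) ∧ projSq u a = 1 ∧ projSq u b < 1 := by
  classical
  obtain ⟨x, hxa, hxb⟩ := SetLike.not_le_iff_exists.1 hab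
  have hx0 : x ≠ 0 := fun h => hxb (h ▸ b.1.zero_mem)
  set u : H := (‖x‖⁻¹ : ℝ) • x with hu
  have hnorm : ‖u‖ = 1 := by
    rw [hu, norm_smul, norm_inv, norm_norm, inv_mul_cancel₀ (norm_ne_zero_iff.2 hx0)]
  have hua : u ∈ a.1 := a.1.smul_mem _ hxa
  have hub : u ∉ b.1 := by
    intro h
    apply hxb
    have : (‖x‖ : ℝ) • u ∈ b.1 := b.1.smul_mem _ h
    rwa [hu, smul_smul, mul_inv_cancel₀ (norm_ne_zero_iff.2 hx0), one_smul] at this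
  haveI : CompleteSpace a.1 := a.2.completeSpace_coe
  haveI : CompleteSpace b.1 := b.2.completeSpace_coe
  have hstate := aux_state u hnorm
  have hma : projSq u a = 1 := by
    have : (Submodule.orthogonalProjection a.1 u : H) = u := Submodule.starProjection_eq_self_iff.2 hua
    simp [projSq, this, hnorm]
  have hmb : projSq u b < 1 := by
    have hle := (hstate.1 b).2
    rcases lt_or_eq_of_le hle with h | h
    · exact h
    · exfalso
      have hsq : ‖u‖ ^ 2 = ‖Submodule.orthogonalProjection b.1 u‖ ^ 2
          + ‖Submodule.orthogonalProjection b.1ᗮ u‖ ^ 2 := Submodule.norm_sq_eq_add_norm_sq_projection u b.1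
      have h1 : ‖(Submodule.orthogonalProjection b.1 u : H)‖ ^ 2 = 1 := h
      have h2 : ‖(Submodule.orthogonalProjection b.1ᗮ u : H)‖ ^ 2 = 0 := by
        have : (1 : ℝ) = ‖Submodule.orthogonalProjection b.1 u‖ ^ 2 + ‖Submodule.orthogonalProjection b.1ᗮ u‖ ^ 2 := by
          rw [← hsq, hnorm]; norm_num
        have hcoe : ‖Submodule.orthogonalProjection b.1 u‖ = ‖(Submodule.orthogonalProjection b.1 u : H)‖ := rfl
        have hcoe2 : ‖Submodule.orthogonalProjection b.1ᗮ u‖ = ‖(Submodule.orthogonalProjection b.1ᗮ u : H)‖ := rfl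
        rw [hcoe, hcoe2, h1] at this
        linarith
      have h3 : (Submodule.orthogonalProjection b.1ᗮ u : H) = 0 := by
        have := pow_eq_zero_iff (n := 2) (by norm_num) |>.1 h2
        exact norm_eq_zero.1 this
      have h4 : u ∈ b.1 := by
        have : (Submodule.orthogonalProjection b.1 u : H) + (Submodule.orthogonalProjection b.1ᗮ u : H) = u :=
          Submodule.starProjection_add_starProjection_orthogonal (K := b.1) u
        rw [h3, add_zero] at this
        rw [← this]
        exact (Submodule.orthogonalProjection b.1 u).2
      exact hub h4
  exact ⟨u, hnorm, hua, hub, hstate, hma, hmb⟩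

open ClosedSubspace in
/-- If `a`, `b` are closed subspaces of a complex Hilbert space `H` with `a` not
contained in `b`, there is a unit vector `u ∈ a \ b` such that
`m(c) = ‖P_c u‖²` is a state on `C(H)` with `m(a) = 1` and `m(b) < 1`.
Consequently `C(H)` admits a strong set of states. -/
theorem stmt_6 {H : Type*} [NormedAddCommGroup H] [InnerProductSpace ℂ H] [CompleteSpace H]
    (a b : ClosedSubspace H) (hab : ¬ le a b) :
    (∃ u : H, ‖u‖ = 1 ∧ u ∈ a.1 ∧ u ∉ b.1 ∧
      IsState (projSq u) ∧ projSq u a = 1 ∧ projSq u b < 1) ∧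
    ∃ S : Set (ClosedSubspace H → ℝ), S.Nonempty ∧ (∀ m ∈ S, IsState m) ∧
      ∀ c d : ClosedSubspace H, ∃ m ∈ S, ((m c = 1 → m d = 1) → le c d) := by
  classical
  obtain ⟨u, h1, h2, h3, h4, h5, h6⟩ := aux_exists a b hab
  refine ⟨⟨u, h1, h2, h3, h4, h5, h6⟩, {m | IsState m}, ⟨projSq u, h4⟩, fun m hm => hm, ?_⟩
  intro c d
  by_cases hcd : le c d
  · exact ⟨projSq u, h4, fun _ => hcd⟩
  · obtain ⟨w, _, _, _, hw4, hw5, hw6⟩ := aux_exists c d hcd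
    exact ⟨projSq w, hw4, fun h => absurd (h hw5) (ne_of_lt hw6)⟩
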